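/- Let G be a finite connected simple graph. Then b(G) ≤ b(T(G)) ≤ b(G) + 1, where T(G) is the total graph of G. -/

import Mathlib

open SimpleGraph

/-- `b` is a burning sequence of length `k` for `G`: the source `b i` is burned at time `i + 1`
(for `i : Fin k`), and every vertex must be within distance `k - (i + 1)` of some source `b i`
(expressed via the existence of a short enough walk, so that unreachable vertices are never
considered burned). -/
def IsBurningSeq {V : Type*} (G : SimpleGraph V) {k : ℕ} (b : Fin k → V) : Prop :=
  ∀ v : V, ∃ i : Fin k, ∃ w : G.Walk v (b i), w.length + (i : ℕ) + 1 ≤ k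

/-- The burning number of `G`: the least `k` admitting a burning sequence of length `k`. -/
noncomputable def burningNumber {V : Type*} (G : SimpleGraph V) : ℕ :=
  sInf {k : ℕ | ∃ b : Fin k → V, IsBurningSeq G b}

/-- The total graph of `G`, on vertex set `V ⊕ E(G)`: two vertices of `G` are adjacent iff
adjacent in `G`; two edges are adjacent iff distinct and sharing an endpoint; a vertex and
an edge are adjacent iff the vertex is an endpoint of the edge. -/
def totalGraph {V : Type*} (G : SimpleGraph V) : SimpleGraph (V ⊕ G.edgeSet) :=
  SimpleGraph.fromRel (fun x y =>
    match x, y with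
    | Sum.inl u, Sum.inl v => G.Adj u v
    | Sum.inr e, Sum.inr f => ∃ v : V, v ∈ (e : Sym2 V) ∧ v ∈ (f : Sym2 V)
    | Sum.inl v, Sum.inr e => v ∈ (e : Sym2 V)
    | Sum.inr _, Sum.inl _ => False)

section Aux
variable {V : Type*} {G : SimpleGraph V}

lemma edge_mem_cases {e : Sym2 V} (he : e ∈ G.edgeSet) {u s : V}
    (hu : u ∈ e) (hs : s ∈ e) : u = s ∨ G.Adj u s := by
  induction e using Sym2.ind with
  | _ a b =>
    rw [Sym2.mem_iff] at hu hs
    rw [SimpleGraph.mem_edgeSet] at he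
    rcases hu with rfl | rfl <;> rcases hs with rfl | rfl
    · exact Or.inl rfl
    · exact Or.inr he
    · exact Or.inr he.symm
    · exact Or.inl rfl

def inlHom (G : SimpleGraph V) : G →g totalGraph G where
  toFun := Sum.inl
  map_rel' := fun {u v} h => by
    rw [totalGraph, SimpleGraph.fromRel_adj]
    exact ⟨by simp [h.ne], Or.inl h⟩

lemma adj_inr_inl {e : G.edgeSet} {u : V} (h : u ∈ (e : Sym2 V)) :
    (totalGraph G).Adj (Sum.inr e) (Sum.inl u) := by
  rw [totalGraph, SimpleGraph.fromRel_adj]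
  exact ⟨by simp, Or.inr h⟩

lemma proj {x y : V ⊕ G.edgeSet} (w : (totalGraph G).Walk x y) :
    ∀ v : V, y = Sum.inl v →
      (∀ u : V, x = Sum.inl u → ∃ p : G.Walk u v, p.length ≤ w.length) ∧
      (∀ e : G.edgeSet, x = Sum.inr e →
        ∃ u, u ∈ (e : Sym2 V) ∧ ∃ p : G.Walk u v, p.length + 1 ≤ w.length) := by
  induction w with
  | nil =>
    rintro v rfl
    constructor
    · rintro u h
      cases h
      exact ⟨SimpleGraph.Walk.nil, le_refl _⟩
    · rintro e h
      exact absurd h (by simp)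
  | @cons x y z h w ih =>
    rintro v rfl
    have hadj := h
    rw [totalGraph, SimpleGraph.fromRel_adj] at hadj
    obtain ⟨hne, hrel⟩ := hadj
    constructor
    · rintro u rfl
      match y with
      | Sum.inl u' =>
        have hadj' : G.Adj u u' := by
          rcases hrel with h1 | h1
          · exact h1
          · exact h1.symm
        obtain ⟨p, hp⟩ := (ih v rfl).1 u' rfl
        refine ⟨SimpleGraph.Walk.cons hadj' p, ?_⟩
        simp only [SimpleGraph.Walk.length_cons]
        omega
      | Sum.inr f =>
        have hmem : u ∈ (f : Sym2 V) := by
          rcases hrel with h1 | h1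
          · exact h1
          · exact absurd h1 (by simp)
        obtain ⟨s, hs, p, hp⟩ := (ih v rfl).2 f rfl
        rcases edge_mem_cases f.2 hmem hs with rfl | hadj'
        · refine ⟨p, ?_⟩
          simp only [SimpleGraph.Walk.length_cons]
          omega
        · refine ⟨SimpleGraph.Walk.cons hadj' p, ?_⟩
          simp only [SimpleGraph.Walk.length_cons]
          omega
    · rintro e rfl
      match y with
      | Sum.inl u' =>
        have hmem : u' ∈ (e : Sym2 V) := by
          rcases hrel with h1 | h1
          · exact absurd h1 (by simp)
          · exact h1
        obtain ⟨p, hp⟩ := (ih v rfl).1 u' rfl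
        refine ⟨u', hmem, p, ?_⟩
        simp only [SimpleGraph.Walk.length_cons]
        omega
      | Sum.inr f =>
        have hmem : ∃ t, t ∈ (e : Sym2 V) ∧ t ∈ (f : Sym2 V) := by
          rcases hrel with h1 | h1
          · exact h1
          · obtain ⟨t, ht1, ht2⟩ := h1
            exact ⟨t, ht2, ht1⟩
        obtain ⟨t, hte, htf⟩ := hmem
        obtain ⟨s, hs, p, hp⟩ := (ih v rfl).2 f rfl
        rcases edge_mem_cases f.2 htf hs with rfl | hadj'
        · refine ⟨t, hte, p, ?_⟩
          simp only [SimpleGraph.Walk.length_cons]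
          omega
        · refine ⟨t, hte, SimpleGraph.Walk.cons hadj' p, ?_⟩
          simp only [SimpleGraph.Walk.length_cons]
          omega

lemma exists_isBurningSeq {W : Type*} [Fintype W] (H : SimpleGraph W) (hc : H.Connected) :
    {k : ℕ | ∃ b : Fin k → W, IsBurningSeq H b}.Nonempty := by
  classical
  haveI : Nonempty W := hc.nonempty
  have hcard : 0 < Fintype.card W := Fintype.card_pos
  obtain ⟨w0⟩ := hc.nonempty
  refine ⟨Fintype.card W, fun _ => w0, fun v => ?_⟩
  obtain ⟨p⟩ := hc.preconnected v w0
  refine ⟨⟨0, hcard⟩, p.toPath.1, ?_⟩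
  have := p.toPath.2.length_lt
  simpa using this

lemma totalGraph_connected (hc : G.Connected) : (totalGraph G).Connected := by
  obtain ⟨v0⟩ := hc.nonempty
  have key : ∀ x : V ⊕ G.edgeSet, (totalGraph G).Reachable x (Sum.inl v0) := by
    intro x
    match x with
    | Sum.inl u => exact (hc.preconnected u v0).map (inlHom G)
    | Sum.inr e =>
      exact SimpleGraph.Reachable.trans (SimpleGraph.Adj.reachable
        (adj_inr_inl (e := e) (Sym2.out_fst_mem _)))
        ((hc.preconnected _ v0).map (inlHom G))
  haveI : Nonempty (V ⊕ G.edgeSet) := ⟨Sum.inl v0⟩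
  exact ⟨fun x y => (key x).trans (key y).symm⟩

lemma burningNumber_le {W : Type*} (H : SimpleGraph W) {k : ℕ} (b : Fin k → W)
    (hb : IsBurningSeq H b) : burningNumber H ≤ k :=
  Nat.sInf_le ⟨b, hb⟩

lemma exists_burningSeq_of_nonempty {W : Type*} (H : SimpleGraph W)
    (hne : {k : ℕ | ∃ b : Fin k → W, IsBurningSeq H b}.Nonempty) :
    ∃ b : Fin (burningNumber H) → W, IsBurningSeq H b :=
  Nat.sInf_mem hne

end Aux

/-- For a connected graph `G`, `b(G) ≤ b(T(G)) ≤ b(G) + 1`, where `T(G)` is the total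
graph of `G`. -/
theorem burningNumber_totalGraph_bounds {V : Type*} [Fintype V]
    (G : SimpleGraph V) (hconn : G.Connected) :
    burningNumber G ≤ burningNumber (totalGraph G) ∧
      burningNumber (totalGraph G) ≤ burningNumber G + 1 := by
  classical
  haveI : Finite G.edgeSet := Subtype.finite
  haveI : Fintype (V ⊕ G.edgeSet) := Fintype.ofFinite _
  have hTconn := totalGraph_connected hconn
  have hTne := exists_isBurningSeq (totalGraph G) hTconn
  have hGne := exists_isBurningSeq G hconn
  constructor
  · -- lower bound
    obtain ⟨b, hb⟩ := exists_burningSeq_of_nonempty (totalGraph G) hTne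
    refine burningNumber_le G
      (fun i => Sum.elim id (fun e : G.edgeSet => (e : Sym2 V).out.1) (b i)) (fun v => ?_)
    obtain ⟨i, w, hw⟩ := hb (Sum.inl v)
    have hproj := proj w.reverse v rfl
    match hbi : b i with
    | Sum.inl u =>
      obtain ⟨p, hp⟩ := hproj.1 u hbi
      rw [SimpleGraph.Walk.length_reverse] at hp
      refine ⟨i, (p.reverse).copy rfl
        (by show _ = Sum.elim id (fun e : G.edgeSet => (e : Sym2 V).out.1) (b i); rw [hbi]; rfl), ?_⟩
      rw [SimpleGraph.Walk.length_copy, SimpleGraph.Walk.length_reverse]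
      omega
    | Sum.inr e =>
      obtain ⟨s, hs, p, hp⟩ := hproj.2 e hbi
      rw [SimpleGraph.Walk.length_reverse] at hp
      have hout := Sym2.out_fst_mem (e : Sym2 V)
      rcases edge_mem_cases e.2 hout hs with heq | hadj'
      · refine ⟨i, (p.reverse).copy rfl
          (by show _ = Sum.elim id (fun e : G.edgeSet => (e : Sym2 V).out.1) (b i)
              rw [hbi]; exact heq.symm), ?_⟩
        rw [SimpleGraph.Walk.length_copy, SimpleGraph.Walk.length_reverse]
        omega
      · refine ⟨i, ((SimpleGraph.Walk.cons hadj' p).reverse).copy rfl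
          (by show _ = Sum.elim id (fun e : G.edgeSet => (e : Sym2 V).out.1) (b i); rw [hbi]; rfl), ?_⟩
        rw [SimpleGraph.Walk.length_copy, SimpleGraph.Walk.length_reverse,
          SimpleGraph.Walk.length_cons]
        omega
  · -- upper bound
    obtain ⟨b, hb⟩ := exists_burningSeq_of_nonempty G hGne
    obtain ⟨v0⟩ := hconn.nonempty
    refine burningNumber_le (totalGraph G)
      (fun i : Fin (burningNumber G + 1) =>
        if h : (i : ℕ) < burningNumber G then Sum.inl (b ⟨i, h⟩) else Sum.inl v0) ?_
    rintro (v | e)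
    · obtain ⟨i, w, hw⟩ := hb v
      have hi : (i : ℕ) < burningNumber G + 1 := by omega
      refine ⟨⟨(i : ℕ), hi⟩, (w.map (inlHom G)).copy rfl ?_, ?_⟩
      · show Sum.inl (b i) = dite ((i : ℕ) < burningNumber G)
          (fun h => Sum.inl (b ⟨(i : ℕ), h⟩)) (fun _ => Sum.inl v0)
        rw [dif_pos i.isLt]
      · have hval : ((⟨(i : ℕ), hi⟩ : Fin (burningNumber G + 1)) : ℕ) = (i : ℕ) := rfl
        refine (congrArg (fun n => n + ((⟨(i : ℕ), hi⟩ : Fin (burningNumber G + 1)) : ℕ) + 1)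
          (SimpleGraph.Walk.length_copy _ _ _)).trans_le ?_
        rw [SimpleGraph.Walk.length_map, hval]
        omega
    · have hout := Sym2.out_fst_mem (e : Sym2 V)
      obtain ⟨i, w, hw⟩ := hb ((e : Sym2 V)).out.1
      have hi : (i : ℕ) < burningNumber G + 1 := by omega
      refine ⟨⟨(i : ℕ), hi⟩,
        ((SimpleGraph.Walk.cons (adj_inr_inl hout) (w.map (inlHom G))).copy rfl ?_), ?_⟩
      · show Sum.inl (b i) = dite ((i : ℕ) < burningNumber G)
          (fun h => Sum.inl (b ⟨(i : ℕ), h⟩)) (fun _ => Sum.inl v0)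
        rw [dif_pos i.isLt]
      · have hval : ((⟨(i : ℕ), hi⟩ : Fin (burningNumber G + 1)) : ℕ) = (i : ℕ) := rfl
        refine (congrArg (fun n => n + ((⟨(i : ℕ), hi⟩ : Fin (burningNumber G + 1)) : ℕ) + 1)
          (SimpleGraph.Walk.length_copy _ _ _)).trans_le ?_
        show (w.map (inlHom G)).length + 1 + ((⟨(i : ℕ), hi⟩ : Fin (burningNumber G + 1)) : ℕ) + 1
          ≤ burningNumber G + 1
        rw [SimpleGraph.Walk.length_map, hval]
        omega
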